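/- If X is a path-connected semi-locally small loop space, then π₁ˢᵍ(X,x) = π₁ˢ(X,x) for every x ∈ X. -/

import Mathlib

open CategoryTheory Topology

attribute [local instance] Path.Homotopic.setoid

noncomputable section

variable {X Y E : Type*} [TopologicalSpace X] [TopologicalSpace Y] [TopologicalSpace E]

/-- Build an element of the fundamental group from a homotopy class of loops. -/
def fromLoop {x : X} (p : Path.Homotopic.Quotient x x) : FundamentalGroup X x :=
  FundamentalGroup.fromPath p

/-- The homotopy class of loops underlying an element of the fundamental group. -/
def toLoop {x : X} (γ : FundamentalGroup X x) : Path.Homotopic.Quotient x x :=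
  FundamentalGroup.toPath γ

/-- A fundamental group element is *small* if it has a loop representative inside every
neighborhood of the basepoint. -/
def IsSmall {x : X} (γ : FundamentalGroup X x) : Prop :=
  ∀ U ∈ nhds x, ∃ δ : Path x x, (∀ t, δ t ∈ U) ∧ fromLoop ⟦δ⟧ = γ

/-- The set of small loop classes, i.e. the carrier of the small loop group `π₁ˢ(X,x)`. -/
def smallSet (X : Type*) [TopologicalSpace X] (x : X) : Set (FundamentalGroup X x) :=
  {γ | IsSmall γ}

/-- Conjugate of a loop class at `y` by a path `α` from `x` to `y`: `α * β * α⁻¹`. -/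
def conjPath {x y : X} (α : Path x y) (β : FundamentalGroup X y) : FundamentalGroup X x :=
  fromLoop (Path.Homotopic.Quotient.trans
    (Path.Homotopic.Quotient.trans (⟦α⟧ : Path.Homotopic.Quotient x y) (toLoop β))
    (⟦α.symm⟧ : Path.Homotopic.Quotient y x))

/-- The SG subgroup `π₁ˢᵍ(X,x)`: generated by conjugates of small loop classes. -/
def sgSubgroup (X : Type*) [TopologicalSpace X] (x : X) : Subgroup (FundamentalGroup X x) :=
  Subgroup.closure {g | ∃ (y : X) (α : Path x y) (β : FundamentalGroup X y), IsSmall β ∧ g = conjPath α β}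

/-- The map induced on fundamental groups by a continuous map. -/
def piMap (f : C(X, Y)) (x : X) (γ : FundamentalGroup X x) : FundamentalGroup Y (f x) :=
  fromLoop (Path.Homotopic.Quotient.map (toLoop γ) f)

/-- A small loop space: a path-connected, non-simply connected space all of whose loops
are small. -/
def IsSmallLoopSpace (X : Type*) [TopologicalSpace X] : Prop :=
  PathConnectedSpace X ∧ ¬ SimplyConnectedSpace X ∧
    ∀ (x : X) (γ : FundamentalGroup X x), IsSmall γ

/-- A space is homotopically Hausdorff if every nontrivial loop class can be kept away from
some neighborhood of its basepoint. -/
def HomotopicallyHausdorff (X : Type*) [TopologicalSpace X] : Prop :=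
  ∀ (x : X) (γ : FundamentalGroup X x), γ ≠ 1 →
    ∃ U ∈ nhds x, ∀ δ : Path x x, (∀ t, δ t ∈ U) → fromLoop ⟦δ⟧ ≠ γ

/-- The image of `π₁(U,y) → π₁(X,y)`: classes of loops having a representative inside `U`. -/
def loopsIn (U : Set X) (y : X) : Set (FundamentalGroup X y) :=
  {γ | ∃ δ : Path y y, (∀ t, δ t ∈ U) ∧ fromLoop ⟦δ⟧ = γ}

/-- A semi-locally small loop space. -/
def SemiLocallySmallLoop (X : Type*) [TopologicalSpace X] : Prop :=
  ∀ x : X, ∃ U : Set X, IsOpen U ∧ x ∈ U ∧ ∀ y ∈ U, loopsIn U y = smallSet X y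



-- ### auxiliary lemmas

lemma toLoop_fromLoop {x : X} (p : Path.Homotopic.Quotient x x) : toLoop (fromLoop p) = p := rfl

lemma aut_ext {x : X} {γ δ : FundamentalGroup X x} (h : toLoop γ = toLoop δ) : γ = δ := h

lemma quot_comp_assoc {w x y z : X} (p : Path.Homotopic.Quotient w x)
    (q : Path.Homotopic.Quotient x y) (r : Path.Homotopic.Quotient y z) :
    (p.trans q).trans r = p.trans (q.trans r) :=
  @Category.assoc (FundamentalGroupoid X) _ ⟨w⟩ ⟨x⟩ ⟨y⟩ ⟨z⟩ p q r

lemma quot_id_comp {x y : X} (p : Path.Homotopic.Quotient x y) :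
    (Path.Homotopic.Quotient.trans (⟦Path.refl x⟧ : Path.Homotopic.Quotient x x) p) = p :=
  @Category.id_comp (FundamentalGroupoid X) _ ⟨x⟩ ⟨y⟩ p

lemma quot_comp_id {x y : X} (p : Path.Homotopic.Quotient x y) :
    (p.trans (⟦Path.refl y⟧ : Path.Homotopic.Quotient y y)) = p :=
  @Category.comp_id (FundamentalGroupoid X) _ ⟨x⟩ ⟨y⟩ p

lemma comp_lift {x₀ x₁ x₂ : X} (P₀ : Path x₀ x₁) (P₁ : Path x₁ x₂) :
    (⟦P₀.trans P₁⟧ : Path.Homotopic.Quotient x₀ x₂) =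
      Path.Homotopic.Quotient.trans (⟦P₀⟧ : Path.Homotopic.Quotient x₀ x₁) ⟦P₁⟧ := rfl

lemma toLoop_conjPath {x y : X} (α : Path x y) (β : FundamentalGroup X y) :
    toLoop (conjPath α β) =
      (Path.Homotopic.Quotient.trans
        (Path.Homotopic.Quotient.trans (⟦α⟧ : Path.Homotopic.Quotient x y) (toLoop β))
        (⟦α.symm⟧ : Path.Homotopic.Quotient y x)) := rfl

/-- homotopic-invariance of conjPath in the path argument -/
lemma conjPath_congr {x y : X} {α₁ α₂ : Path x y} (h : α₁.Homotopic α₂)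
    (β : FundamentalGroup X y) : conjPath α₁ β = conjPath α₂ β := by
  apply aut_ext
  have hs : α₁.symm ≈ α₂.symm := Nonempty.intro h.some.symm₂
  have h' : α₁ ≈ α₂ := h
  rw [toLoop_conjPath, toLoop_conjPath, Quotient.sound h', Quotient.sound hs]

lemma conjPath_trans {x a b : X} (σ : Path x a) (τ : Path a b) (β : FundamentalGroup X b) :
    conjPath (σ.trans τ) β = conjPath σ (conjPath τ β) := by
  apply aut_ext
  rw [toLoop_conjPath, toLoop_conjPath, toLoop_conjPath, Path.trans_symm,
    comp_lift, comp_lift]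
  have key : ∀ {p q r : X} (A : Path.Homotopic.Quotient p q) (T : Path.Homotopic.Quotient q r)
      (L : Path.Homotopic.Quotient r r) (T' : Path.Homotopic.Quotient r q)
      (S' : Path.Homotopic.Quotient q p),
      ((A.trans T).trans L).trans (T'.trans S') = (A.trans ((T.trans L).trans T')).trans S' := by
    intros; simp only [Path.Homotopic.Quotient.trans_assoc]
  exact key _ _ _ _ _

/-- a small-loop transfer along a path inside a good set `W`. -/
lemma transfer {W : Set X} (hW : ∀ z ∈ W, loopsIn W z = smallSet X z) {a b : X}
    (ha : a ∈ W) (hb : b ∈ W) (σ : Path a b) (hσ : ∀ u, σ u ∈ W)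
    {β : FundamentalGroup X b} (hβ : IsSmall β) : IsSmall (conjPath σ β) := by
  have hb' : β ∈ loopsIn W b := by rw [hW b hb]; exact hβ
  obtain ⟨δ, hδW, hδ⟩ := hb'
  have : conjPath σ β ∈ loopsIn W a := by
    refine ⟨(σ.trans δ).trans σ.symm, ?_, ?_⟩
    · intro t
      rw [Path.trans_apply]
      split_ifs
      · rw [Path.trans_apply]; split_ifs
        · exact hσ _
        · exact hδW _
      · simp only [Path.symm_apply]; exact hσ _
    · apply aut_ext
      change (⟦(σ.trans δ).trans σ.symm⟧ : Path.Homotopic.Quotient a a) = _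
      rw [toLoop_conjPath, comp_lift, comp_lift]
      have : toLoop β = ⟦δ⟧ := by rw [← hδ]; rfl
      rw [this]
  rwa [hW a ha] at this

/-- two paths that are both reparametrizations `α.extend ∘ fᵢ` with matching endpoints
are homotopic (linear homotopy through `α.extend`). -/
lemma homotopic_of_extend {x y a b : X} (α : Path x y) (γ₁ γ₂ : Path a b) (f₁ f₂ : unitInterval → ℝ)
    (hc₁ : Continuous f₁) (hc₂ : Continuous f₂)
    (h₁ : ∀ u, γ₁ u = α.extend (f₁ u)) (h₂ : ∀ u, γ₂ u = α.extend (f₂ u))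
    (h0 : f₁ 0 = f₂ 0) (h1 : f₁ 1 = f₂ 1) : γ₁.Homotopic γ₂ := by
  refine Nonempty.intro ?_
  refine ⟨⟨⟨fun p => α.extend ((1 - (p.1 : ℝ)) * f₁ p.2 + (p.1 : ℝ) * f₂ p.2), ?_⟩, ?_, ?_⟩, ?_⟩
  · exact α.continuous_extend.comp (by continuity)
  · intro u; simp [h₁ u]
  · intro u; simp [h₂ u]
  · intro t u hu
    have hfu : f₁ u = f₂ u := by
      rcases hu with hu | hu <;> subst hu
      · exact h0
      · exact h1
    show α.extend ((1 - (t : ℝ)) * f₁ u + (t : ℝ) * f₂ u) = γ₁ u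
    rw [h₁ u, ← hfu]; ring_nf

/-- the affine segment of `α` from parameter `s` to parameter `t`. -/
def segc {x y : X} (α : Path x y) (s t : unitInterval) : Path (α s) (α t) where
  toFun u := α.extend ((1 - (u : ℝ)) * s + (u : ℝ) * t)
  continuous_toFun := α.continuous_extend.comp (by continuity)
  source' := by simp [α.extend_extends' s]
  target' := by simp [α.extend_extends' t]

lemma segc_apply {x y : X} (α : Path x y) (s t u : unitInterval) :
    segc α s t u = α.extend ((1 - (u : ℝ)) * s + (u : ℝ) * t) := rfl

lemma segc_mem {x y : X} (α : Path x y) {W : Set X} {s t : unitInterval}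
    (h : ∀ r : unitInterval, min (s:ℝ) t ≤ r → (r:ℝ) ≤ max (s:ℝ) t → α r ∈ W) :
    ∀ u, segc α s t u ∈ W := by
  intro u
  set r : ℝ := (1 - (u : ℝ)) * s + (u : ℝ) * t with hr
  have hu0 : (0:ℝ) ≤ u := u.2.1
  have hu1 : (u:ℝ) ≤ 1 := u.2.2
  have hmin : min (s:ℝ) t ≤ r := by
    rcases le_total (s:ℝ) t with hst | hst
    · rw [min_eq_left hst]; nlinarith
    · rw [min_eq_right hst]; nlinarith
  have hmax : r ≤ max (s:ℝ) t := by
    rcases le_total (s:ℝ) t with hst | hst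
    · rw [max_eq_right hst]; nlinarith
    · rw [max_eq_left hst]; nlinarith
  have hrI : r ∈ Set.Icc (0:ℝ) 1 := by
    constructor
    · calc (0:ℝ) ≤ min (s:ℝ) t := le_min s.2.1 t.2.1
        _ ≤ r := hmin
    · calc r ≤ max (s:ℝ) t := hmax
        _ ≤ 1 := max_le s.2.2 t.2.2
  have : segc α s t u = α ⟨r, hrI⟩ := by
    rw [segc_apply, Path.extend_apply α hrI]
  rw [this]
  exact h ⟨r, hrI⟩ hmin hmax

/-- the tail of `α` from parameter `t`, as a path from `α t` to `y`. -/
def tailc {x y : X} (α : Path x y) (t : unitInterval) : Path (α t) y :=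
  (segc α t 1).cast rfl α.target.symm

lemma tailc_apply {x y : X} (α : Path x y) (t u : unitInterval) :
    tailc α t u = α.extend ((1 - (u : ℝ)) * t + (u : ℝ)) := by
  show (segc α t 1) u = _
  rw [segc_apply]; norm_num

/-- key decomposition: `tailc α s` is homotopic to `segc α s t` followed by `tailc α t`. -/
lemma tailc_decomp {x y : X} (α : Path x y) (s t : unitInterval) :
    ((segc α s t).trans (tailc α t)).Homotopic (tailc α s) := by
  apply homotopic_of_extend α _ _
    (fun u => if (u:ℝ) ≤ 1/2 then (1 - 2*(u:ℝ)) * s + (2*(u:ℝ)) * t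
      else (1 - (2*(u:ℝ)-1)) * t + (2*(u:ℝ)-1))
    (fun u => (1 - (u:ℝ)) * s + (u:ℝ))
  · apply Continuous.if_le
    · continuity
    · continuity
    · continuity
    · continuity
    · intro u hu; rw [hu]; ring
  · continuity
  · intro u
    rw [Path.trans_apply]
    split_ifs with h
    · rw [segc_apply]
    · rw [tailc_apply]
  · intro u
    rw [tailc_apply]
  · norm_num
  · norm_num

lemma head_decomp {x y : X} (α : Path x y) :
    (((Path.refl x).cast rfl α.source).trans (tailc α 0)).Homotopic α := by
  apply homotopic_of_extend α _ _
    (fun u => if (u:ℝ) ≤ 1/2 then 0 else 2*(u:ℝ) - 1)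
    (fun u => (u:ℝ))
  · apply Continuous.if_le
    · continuity
    · continuity
    · exact continuous_subtype_val
    · continuity
    · intro u hu; rw [hu]; norm_num
  · exact continuous_subtype_val
  · intro u
    rw [Path.trans_apply]
    split_ifs with h
    · show x = α.extend 0
      rw [Path.extend_zero]
    · rw [tailc_apply]
      norm_num
  · intro u; exact (α.extend_extends' u).symm
  · norm_num
  · norm_num

lemma conj_isSmall (hX : SemiLocallySmallLoop X) {x y : X} (α : Path x y)
    {β : FundamentalGroup X y} (hβ : IsSmall β) : IsSmall (conjPath α β) := by
  set A : Set unitInterval := {t | IsSmall (conjPath (tailc α t) β)} with hA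
  have step : ∀ (W : Set X), (∀ z ∈ W, loopsIn W z = smallSet X z) →
      ∀ s t : unitInterval, α s ∈ W → α t ∈ W → (∀ u, segc α s t u ∈ W) →
      t ∈ A → s ∈ A := by
    intro W hWeq s t hs ht hseg htA
    have h1 : IsSmall (conjPath (segc α s t) (conjPath (tailc α t) β)) :=
      transfer hWeq hs ht _ hseg htA
    rw [← conjPath_trans, conjPath_congr (tailc_decomp α s t)] at h1
    exact h1
  have key : ∀ t : unitInterval, ∃ ε > 0, ∀ s : unitInterval,
      dist s t < ε → (s ∈ A ↔ t ∈ A) := by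
    intro t
    obtain ⟨W, hWo, hWt, hWeq⟩ := hX (α t)
    obtain ⟨ε, hε, hball⟩ := Metric.isOpen_iff.mp (hWo.preimage α.continuous_toFun) t
      (Set.mem_preimage.mpr hWt)
    refine ⟨ε, hε, fun s hst => ?_⟩
    have hmem : ∀ r : unitInterval, min (s:ℝ) t ≤ r → (r:ℝ) ≤ max (s:ℝ) t → α r ∈ W := by
      intro r h1 h2
      apply hball
      rw [Metric.mem_ball, Subtype.dist_eq, Real.dist_eq]
      have hd : |(r:ℝ) - t| ≤ |(s:ℝ) - t| := by
        rcases le_total (s:ℝ) t with h | h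
        · rw [min_eq_left h] at h1; rw [max_eq_right h] at h2
          have habs : |(s:ℝ) - t| = t - s := by rw [abs_sub_comm, abs_of_nonneg (by linarith)]
          rw [abs_sub_le_iff]; constructor <;> [linarith [abs_nonneg ((s:ℝ) - t)]; linarith]
        · rw [min_eq_right h] at h1; rw [max_eq_left h] at h2
          have habs : |(s:ℝ) - t| = s - t := abs_of_nonneg (by linarith)
          rw [abs_sub_le_iff]; constructor <;> [linarith; linarith [abs_nonneg ((s:ℝ) - t)]]
      calc |(r:ℝ) - t| ≤ |(s:ℝ) - t| := hd
        _ < ε := by rw [Subtype.dist_eq, Real.dist_eq] at hst; exact hst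
    have hsW : α s ∈ W := hmem s (min_le_left _ _) (le_max_left _ _)
    constructor
    · intro hsA
      refine step W hWeq t s hWt hsW (segc_mem α ?_) hsA
      intro r h1 h2
      exact hmem r (by rwa [min_comm]) (by rwa [max_comm])
    · intro htA
      exact step W hWeq s t hsW hWt (segc_mem α hmem) htA
  have hopen : IsOpen A := by
    rw [isOpen_iff_mem_nhds]
    intro t htA
    obtain ⟨ε, hε, hiff⟩ := key t
    exact Filter.mem_of_superset (Metric.ball_mem_nhds t hε)
      (fun s hs => (hiff s (Metric.mem_ball.mp hs)).mpr htA)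
  have hclosed : IsClosed A := by
    rw [← isOpen_compl_iff, isOpen_iff_mem_nhds]
    intro t htA
    obtain ⟨ε, hε, hiff⟩ := key t
    exact Filter.mem_of_superset (Metric.ball_mem_nhds t hε)
      (fun s hs hsA => htA ((hiff s (Metric.mem_ball.mp hs)).mp hsA))
  have hone : (1 : unitInterval) ∈ A := by
    obtain ⟨W, hWo, hWy, hWeq⟩ := hX y
    have h1 : α 1 ∈ W := by rw [α.target]; exact hWy
    refine transfer hWeq h1 hWy (tailc α 1) ?_ hβ
    intro u
    have : tailc α 1 u = y := by
      rw [tailc_apply]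
      norm_num
    rw [this]; exact hWy
  have hAuniv : A = Set.univ := by
    rcases isClopen_iff.mp ⟨hclosed, hopen⟩ with h | h
    · exact absurd (h ▸ hone) (Set.notMem_empty _)
    · exact h
  have h0 : IsSmall (conjPath (tailc α 0) β) := by
    have : (0 : unitInterval) ∈ A := hAuniv ▸ Set.mem_univ _
    exact this
  set σ₀ : Path x (α 0) := (Path.refl x).cast rfl α.source with hσ₀
  have hσ₀const : ∀ u, σ₀ u = x := fun u => rfl
  have hcomp : conjPath σ₀ (conjPath (tailc α 0) β) = conjPath α β := by
    rw [← conjPath_trans]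
    exact conjPath_congr (head_decomp α) β
  rw [← hcomp]
  obtain ⟨W, hWo, hWx, hWeq⟩ := hX x
  refine transfer hWeq hWx (by rw [α.source]; exact hWx) σ₀ ?_ h0
  intro u; rw [hσ₀const]; exact hWx

lemma isSmall_one {x : X} : IsSmall (1 : FundamentalGroup X x) := by
  intro U hU
  exact ⟨Path.refl x, fun t => mem_of_mem_nhds hU, aut_ext rfl⟩

lemma isSmall_mul {x : X} {γ₁ γ₂ : FundamentalGroup X x} (h₁ : IsSmall γ₁) (h₂ : IsSmall γ₂) :
    IsSmall (γ₁ * γ₂) := by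
  intro U hU
  obtain ⟨δ₁, hδ₁U, hδ₁⟩ := h₁ U hU
  obtain ⟨δ₂, hδ₂U, hδ₂⟩ := h₂ U hU
  refine ⟨δ₂.trans δ₁, ?_, ?_⟩
  · intro t
    rw [Path.trans_apply]
    split_ifs
    · exact hδ₂U _
    · exact hδ₁U _
  · apply aut_ext
    change (⟦δ₂.trans δ₁⟧ : Path.Homotopic.Quotient x x) = _
    rw [comp_lift]
    show _ = (toLoop γ₂).trans (toLoop γ₁)
    rw [← hδ₁, ← hδ₂]; rfl

lemma isSmall_inv {x : X} {γ : FundamentalGroup X x} (h : IsSmall γ) : IsSmall γ⁻¹ := by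
  intro U hU
  obtain ⟨δ, hδU, hδ⟩ := h U hU
  refine ⟨δ.symm, fun t => hδU _, ?_⟩
  have key : fromLoop ⟦δ.symm⟧ * γ = 1 := by
    apply aut_ext
    show (toLoop γ).trans ⟦δ.symm⟧ = (⟦Path.refl x⟧ : Path.Homotopic.Quotient x x)
    rw [← hδ]
    change Path.Homotopic.Quotient.trans (⟦δ⟧ : Path.Homotopic.Quotient x x) ⟦δ.symm⟧ = _
    rw [← comp_lift]
    exact Quotient.sound (Nonempty.intro (Path.Homotopy.reflTransSymm δ).symm)
  calc fromLoop ⟦δ.symm⟧ = fromLoop ⟦δ.symm⟧ * γ * γ⁻¹ := by group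
    _ = 1 * γ⁻¹ := by rw [key]
    _ = γ⁻¹ := one_mul _

def smallSubgroup (X : Type*) [TopologicalSpace X] (x : X) : Subgroup (FundamentalGroup X x) where
  carrier := smallSet X x
  one_mem' := isSmall_one
  mul_mem' := fun h₁ h₂ => isSmall_mul h₁ h₂
  inv_mem' := fun h => isSmall_inv h

lemma conjPath_refl {x : X} (γ : FundamentalGroup X x) : conjPath (Path.refl x) γ = γ := by
  apply aut_ext
  rw [toLoop_conjPath, Path.refl_symm, quot_comp_id, quot_id_comp]

/-- if `X` is a path-connected semi-locally small loop space, then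
`π₁ˢᵍ(X,x) = π₁ˢ(X,x)` for every `x ∈ X`. -/
theorem sg_eq_small_of_semiLocallySmallLoop (X : Type*) [TopologicalSpace X]
    [PathConnectedSpace X] (hX : SemiLocallySmallLoop X) (x : X) :
    (sgSubgroup X x : Set (FundamentalGroup X x)) = smallSet X x := by
  apply Set.Subset.antisymm
  · have hle : sgSubgroup X x ≤ smallSubgroup X x := by
      rw [sgSubgroup, Subgroup.closure_le]
      rintro g ⟨y, α, β, hβ, rfl⟩
      exact conj_isSmall hX α hβ
    exact hle
  · intro γ hγ
    apply Subgroup.subset_closure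
    exact ⟨x, Path.refl x, γ, hγ, (conjPath_refl γ).symm⟩

end
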